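/- Initiality (Theorem 3.2, algebra part): let E be an effect signature, X a type, A a partial order with least element ⊥ in which every directed subset has a least upper bound, ρ : X → A any function, and for each m : E let α m : (ar m → A) → A be monotone (in the pointwise order) and preserve least upper bounds of directed families. Then there exists a unique function h : S̄_E(X) → A such that: h ∅ = ⊥; h is monotone and preserves least upper bounds of directed families of costrategies (h (⋃D) = sup {h σ | σ ∈ D} for every inclusion-directed nonempty family D of costrategies); h {ret x} = ρ x for all x : X; and h ({op m} ∪ {m·n·s | n : ar m, s ∈ f n}) = α m (fun n => h (f n)) for every m : E and every family f : ar m → S̄_E(X) of costrategies. -/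

import Mathlib

universe u v w

/-- Coplays over an effect signature `(E, ar)` with results in `X`. -/
inductive Coplay (E : Type u) (ar : E → Type v) (X : Type w) : Type (max u v w)
  | ret : X → Coplay E ar X
  | op : E → Coplay E ar X
  | cons : (m : E) → ar m → Coplay E ar X → Coplay E ar X

/-- The prefix relation `⊑` on coplays. -/
inductive Coplay.Prefix {E : Type u} {ar : E → Type v} {X : Type w} :
    Coplay E ar X → Coplay E ar X → Prop
  | ret (x : X) : Coplay.Prefix (.ret x) (.ret x)
  | op (m : E) : Coplay.Prefix (.op m) (.op m)
  | op_cons (m : E) (n : ar m) (t : Coplay E ar X) :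
      Coplay.Prefix (.op m) (.cons m n t)
  | cons (m : E) (n : ar m) {s t : Coplay E ar X} :
      Coplay.Prefix s t → Coplay.Prefix (.cons m n s) (.cons m n t)

/-- The coherence relation `☡` on coplays. -/
inductive Coplay.Coh {E : Type u} {ar : E → Type v} {X : Type w} :
    Coplay E ar X → Coplay E ar X → Prop
  | ret (x : X) : Coplay.Coh (.ret x) (.ret x)
  | op (m : E) : Coplay.Coh (.op m) (.op m)
  | op_cons (m : E) (n : ar m) (s : Coplay E ar X) :
      Coplay.Coh (.op m) (.cons m n s)
  | cons (m : E) (n₁ n₂ : ar m) (s₁ s₂ : Coplay E ar X) :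
      (n₁ = n₂ → Coplay.Coh s₁ s₂) → Coplay.Coh (.cons m n₁ s₁) (.cons m n₂ s₂)

/-- A costrategy: a set of coplays, downward closed under the prefix relation
and pairwise coherent. -/
def IsCostrategy {E : Type u} {ar : E → Type v} {X : Type w}
    (σ : Set (Coplay E ar X)) : Prop :=
  (∀ s t : Coplay E ar X, Coplay.Prefix s t → t ∈ σ → s ∈ σ) ∧
  (∀ s ∈ σ, ∀ t ∈ σ, Coplay.Coh s t ∨ Coplay.Coh t s)

namespace CS

variable {E : Type u} {ar : E → Type v} {X : Type w}

def branch (m : E) (n : ar m) (σ : Set (Coplay E ar X)) : Set (Coplay E ar X) :=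
  {s | Coplay.cons m n s ∈ σ}

lemma branch_mono {m : E} {n : ar m} {σ τ : Set (Coplay E ar X)} (h : σ ⊆ τ) :
    branch m n σ ⊆ branch m n τ := fun _ hs => h hs

lemma branch_isCostrategy {σ : Set (Coplay E ar X)} (hσ : IsCostrategy σ)
    (m : E) (n : ar m) : IsCostrategy (branch m n σ) := by
  constructor
  · intro s t hst ht
    exact hσ.1 _ _ (Coplay.Prefix.cons m n hst) ht
  · intro s hs t ht
    rcases hσ.2 _ hs _ ht with h | h
    · cases h with
      | cons _ _ _ _ _ h => exact Or.inl (h rfl)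
    · cases h with
      | cons _ _ _ _ _ h => exact Or.inr (h rfl)

lemma ret_eq {σ : Set (Coplay E ar X)} (hσ : IsCostrategy σ) {x : X}
    (hx : Coplay.ret x ∈ σ) : σ = {Coplay.ret x} := by
  ext t
  constructor
  · intro ht
    rcases hσ.2 _ hx _ ht with h | h
    · cases h; rfl
    · cases h; rfl
  · rintro rfl; exact hx

lemma op_mem_of_cons {σ : Set (Coplay E ar X)} (hσ : IsCostrategy σ) {m : E}
    {n : ar m} {s : Coplay E ar X} (h : Coplay.cons m n s ∈ σ) : Coplay.op m ∈ σ :=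
  hσ.1 _ _ (Coplay.Prefix.op_cons m n s) h

lemma mem_of_op {σ : Set (Coplay E ar X)} (hσ : IsCostrategy σ) {m : E}
    (hm : Coplay.op m ∈ σ) {t : Coplay E ar X} (ht : t ∈ σ) :
    t = Coplay.op m ∨ ∃ (n : ar m) (u : Coplay E ar X), t = Coplay.cons m n u := by
  rcases hσ.2 _ hm _ ht with h | h
  · cases h with
    | op => exact Or.inl rfl
    | op_cons _ n s => exact Or.inr ⟨n, s, rfl⟩
  · cases h with
    | op => exact Or.inl rfl

lemma op_eq {σ : Set (Coplay E ar X)} (hσ : IsCostrategy σ) {m : E}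
    (hm : Coplay.op m ∈ σ) :
    σ = {Coplay.op m} ∪
      {s | ∃ (n : ar m) (u : Coplay E ar X), u ∈ branch m n σ ∧ s = Coplay.cons m n u} := by
  ext t
  constructor
  · intro ht
    rcases mem_of_op hσ hm ht with rfl | ⟨n, u, rfl⟩
    · exact Or.inl rfl
    · exact Or.inr ⟨n, u, ht, rfl⟩
  · rintro (rfl | ⟨n, u, hu, rfl⟩)
    · exact hm
    · exact hu

lemma not_ret_of_op {σ : Set (Coplay E ar X)} (hσ : IsCostrategy σ) {m : E}
    (hm : Coplay.op m ∈ σ) : ¬ ∃ x, Coplay.ret x ∈ σ := by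
  rintro ⟨x, hx⟩
  rcases hσ.2 _ hm _ hx with h | h <;> cases h

lemma op_unique {σ : Set (Coplay E ar X)} (hσ : IsCostrategy σ) {m m' : E}
    (hm : Coplay.op m ∈ σ) (hm' : Coplay.op m' ∈ σ) : m = m' := by
  rcases hσ.2 _ hm _ hm' with h | h <;> cases h <;> rfl

lemma classify {σ : Set (Coplay E ar X)} (hσ : IsCostrategy σ) :
    σ = ∅ ∨ (∃ x, σ = {Coplay.ret x}) ∨ ∃ m, Coplay.op m ∈ σ := by
  rcases Set.eq_empty_or_nonempty σ with h | ⟨t, ht⟩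
  · exact Or.inl h
  · right
    cases t with
    | ret x => exact Or.inl ⟨x, ret_eq hσ ht⟩
    | op m => exact Or.inr ⟨m, ht⟩
    | cons m n s => exact Or.inr ⟨m, op_mem_of_cons hσ ht⟩

attribute [local instance] Classical.propDecidable

variable {A : Type*} [PartialOrder A] [OrderBot A]

noncomputable def approx (ρ : X → A) (α : (m : E) → (ar m → A) → A) :
    ℕ → Set (Coplay E ar X) → A
  | 0, _ => ⊥
  | (k+1), σ =>
    if hx : ∃ x, Coplay.ret x ∈ σ then ρ hx.choose
    else if hm : ∃ m, Coplay.op m ∈ σ then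
      α hm.choose (fun n => approx ρ α k (branch hm.choose n σ))
    else ⊥

variable {ρ : X → A} {α : (m : E) → (ar m → A) → A}

lemma approx_zero (σ : Set (Coplay E ar X)) : approx ρ α 0 σ = ⊥ := rfl

lemma approx_empty (k : ℕ) : approx ρ α k (∅ : Set (Coplay E ar X)) = ⊥ := by
  cases k with
  | zero => rfl
  | succ k =>
    rw [approx]
    rw [dif_neg, dif_neg]
    · rintro ⟨m, hm⟩; exact hm
    · rintro ⟨x, hx⟩; exact hx

lemma approx_ret {σ : Set (Coplay E ar X)} {x : X} (hx : σ = {Coplay.ret x}) (k : ℕ) :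
    approx ρ α (k+1) σ = ρ x := by
  subst hx
  have hex : ∃ y, Coplay.ret y ∈ ({Coplay.ret x} : Set (Coplay E ar X)) := ⟨x, rfl⟩
  rw [approx, dif_pos hex]
  have := hex.choose_spec
  rw [Set.mem_singleton_iff] at this
  injection this with h
  exact congrArg ρ h

lemma approx_op {σ : Set (Coplay E ar X)} (hσ : IsCostrategy σ) {m : E}
    (hm : Coplay.op m ∈ σ) (k : ℕ) :
    approx ρ α (k+1) σ = α m (fun n => approx ρ α k (branch m n σ)) := by
  have hnr : ¬ ∃ x, Coplay.ret x ∈ σ := not_ret_of_op hσ hm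
  have hex : ∃ m', Coplay.op m' ∈ σ := ⟨m, hm⟩
  rw [approx, dif_neg hnr, dif_pos hex]
  have hme : hex.choose = m := op_unique hσ hex.choose_spec hm
  subst hme
  rfl


abbrev Costrat (E : Type u) (ar : E → Type v) (X : Type w) :=
  {σ : Set (Coplay E ar X) // IsCostrategy σ}

section Main

variable (hmono : ∀ m : E, Monotone (α m))
variable (hA : ∀ S : Set A, S.Nonempty → DirectedOn (· ≤ ·) S → ∃ l : A, IsLUB S l)
variable (hcont : ∀ (m : E) (S : Set (ar m → A)), S.Nonempty → DirectedOn (· ≤ ·) S →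
      ∀ g : ar m → A, IsLUB S g → IsLUB (α m '' S) (α m g))

include hmono in
lemma approx_le_succ : ∀ (k : ℕ) (σ : Set (Coplay E ar X)), IsCostrategy σ →
    approx ρ α k σ ≤ approx ρ α (k+1) σ := by
  intro k
  induction k with
  | zero => intro σ _; exact bot_le
  | succ k ih =>
    intro σ hσ
    rcases classify hσ with rfl | ⟨x, hx⟩ | ⟨m, hm⟩
    · rw [approx_empty, approx_empty]
    · rw [approx_ret hx, approx_ret hx]
    · rw [approx_op hσ hm, approx_op hσ hm]
      exact hmono m fun n => ih _ (branch_isCostrategy hσ m n)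

include hmono in
lemma approx_mono_nat {σ : Set (Coplay E ar X)} (hσ : IsCostrategy σ) :
    Monotone fun k => approx ρ α k σ :=
  monotone_nat_of_le_succ fun k => approx_le_succ hmono k σ hσ

include hmono in
lemma approx_mono_set : ∀ (k : ℕ) (σ τ : Set (Coplay E ar X)), IsCostrategy σ →
    IsCostrategy τ → σ ⊆ τ → approx ρ α k σ ≤ approx ρ α k τ := by
  intro k
  induction k with
  | zero => intro _ _ _ _ _; exact bot_le
  | succ k ih =>
    intro σ τ hσ hτ hsub
    rcases classify hσ with rfl | ⟨x, hx⟩ | ⟨m, hm⟩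
    · rw [approx_empty]; exact bot_le
    · have hxτ : Coplay.ret x ∈ τ := hsub (hx ▸ rfl)
      rw [approx_ret hx, approx_ret (ret_eq hτ hxτ)]
    · have hmτ : Coplay.op m ∈ τ := hsub hm
      rw [approx_op hσ hm, approx_op hτ hmτ]
      exact hmono m fun n => ih _ _ (branch_isCostrategy hσ m n)
        (branch_isCostrategy hτ m n) (branch_mono hsub)

noncomputable def hfun (ρ : X → A) (α : (m : E) → (ar m → A) → A)
    (hmono : ∀ m : E, Monotone (α m))
    (hA : ∀ S : Set A, S.Nonempty → DirectedOn (· ≤ ·) S → ∃ l : A, IsLUB S l)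
    (σ : Costrat E ar X) : A :=
  (hA (Set.range fun k => approx ρ α k σ.1) ⟨_, 0, rfl⟩
    (directedOn_range.mpr (approx_mono_nat hmono σ.2).directed_le)).choose

lemma hfun_isLUB (σ : Costrat E ar X) :
    IsLUB (Set.range fun k => approx ρ α k σ.1) (hfun ρ α hmono hA σ) :=
  (hA (Set.range fun k => approx ρ α k σ.1) ⟨_, 0, rfl⟩
    (directedOn_range.mpr (approx_mono_nat hmono σ.2).directed_le)).choose_spec

lemma approx_le_hfun (k : ℕ) (σ : Costrat E ar X) :
    approx ρ α k σ.1 ≤ hfun ρ α hmono hA σ :=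
  (hfun_isLUB hmono hA σ).1 ⟨k, rfl⟩

lemma hfun_le {σ : Costrat E ar X} {b : A} (h : ∀ k, approx ρ α k σ.1 ≤ b) :
    hfun ρ α hmono hA σ ≤ b :=
  (hfun_isLUB hmono hA σ).2 (by rintro _ ⟨k, rfl⟩; exact h k)

lemma hfun_empty {σ : Costrat E ar X} (h : σ.1 = ∅) : hfun ρ α hmono hA σ = ⊥ :=
  le_antisymm (hfun_le hmono hA fun k => by rw [h, approx_empty]) bot_le

lemma hfun_mono {σ τ : Costrat E ar X} (h : σ.1 ⊆ τ.1) :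
    hfun ρ α hmono hA σ ≤ hfun ρ α hmono hA τ :=
  hfun_le hmono hA fun k =>
    le_trans (approx_mono_set hmono k _ _ σ.2 τ.2 h) (approx_le_hfun hmono hA k τ)

lemma hfun_ret {σ : Costrat E ar X} {x : X} (h : σ.1 = {Coplay.ret x}) :
    hfun ρ α hmono hA σ = ρ x :=
  le_antisymm
    (hfun_le hmono hA fun k => by
      cases k with
      | zero => exact bot_le
      | succ k => rw [approx_ret h])
    (by rw [← approx_ret (ρ := ρ) (α := α) h 0]; exact approx_le_hfun hmono hA 1 σ)

lemma branch_eq_of_node {σ : Costrat E ar X} {m : E}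
    {f : ar m → Costrat E ar X}
    (h : σ.1 = {Coplay.op m} ∪
      {s | ∃ (n : ar m) (u : Coplay E ar X), u ∈ (f n).1 ∧ s = Coplay.cons m n u})
    (n : ar m) : branch m n σ.1 = (f n).1 := by
  ext u
  simp only [branch, h, Set.mem_union, Set.mem_setOf_eq, Set.mem_singleton_iff]
  constructor
  · rintro (heq | ⟨n', u', hu', heq⟩)
    · exact absurd heq (by intro h; cases h)
    · obtain ⟨-, hn, hu⟩ := Coplay.cons.inj heq
      cases hn; cases hu; exact hu'
  · intro hu
    exact Or.inr ⟨n, u, hu, rfl⟩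

lemma op_mem_of_node {σ : Costrat E ar X} {m : E}
    {f : ar m → Costrat E ar X}
    (h : σ.1 = {Coplay.op m} ∪
      {s | ∃ (n : ar m) (u : Coplay E ar X), u ∈ (f n).1 ∧ s = Coplay.cons m n u}) :
    Coplay.op m ∈ σ.1 := by rw [h]; exact Or.inl rfl

include hcont in
lemma hfun_op {σ : Costrat E ar X} {m : E} {f : ar m → Costrat E ar X}
    (h : σ.1 = {Coplay.op m} ∪
      {s | ∃ (n : ar m) (u : Coplay E ar X), u ∈ (f n).1 ∧ s = Coplay.cons m n u}) :
    hfun ρ α hmono hA σ = α m fun n => hfun ρ α hmono hA (f n) := by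
  have hop : Coplay.op m ∈ σ.1 := op_mem_of_node h
  have happ : ∀ k, approx ρ α (k+1) σ.1 = α m fun n => approx ρ α k (f n).1 := by
    intro k
    rw [approx_op σ.2 hop]
    congr 1
    funext n
    rw [branch_eq_of_node h]
  set S : Set (ar m → A) := Set.range fun k => fun n => approx ρ α k (f n).1 with hS
  have hSne : S.Nonempty := ⟨_, 0, rfl⟩
  have hSdir : DirectedOn (· ≤ ·) S := by
    apply directedOn_range.mpr
    apply Monotone.directed_le
    intro j k hjk n
    exact approx_mono_nat hmono (f n).2 hjk
  set c : ar m → A := fun n => hfun ρ α hmono hA (f n) with hc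
  have hclub : IsLUB S c := by
    constructor
    · rintro _ ⟨k, rfl⟩
      intro n
      exact approx_le_hfun hmono hA k (f n)
    · intro u hu n
      refine (hfun_isLUB hmono hA (f n)).2 ?_
      rintro _ ⟨k, rfl⟩
      exact hu ⟨k, rfl⟩ n
  have hαlub := hcont m S hSne hSdir c hclub
  refine (hfun_isLUB hmono hA σ).unique ?_
  constructor
  · rintro _ ⟨k, rfl⟩
    cases k with
    | zero => exact bot_le
    | succ k =>
      show approx ρ α (k+1) σ.1 ≤ α m c
      rw [happ k]
      exact hαlub.1 ⟨_, ⟨k, rfl⟩, rfl⟩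
  · intro b hb
    apply hαlub.2
    rintro _ ⟨_, ⟨k, rfl⟩, rfl⟩
    exact le_trans (le_of_eq (happ k).symm) (hb ⟨k+1, rfl⟩)

lemma iUnion_isCostrategy {D : Set (Costrat E ar X)}
    (hdir : ∀ σ₁ ∈ D, ∀ σ₂ ∈ D, ∃ σ ∈ D, σ₁.1 ⊆ σ.1 ∧ σ₂.1 ⊆ σ.1) :
    IsCostrategy (⋃ σ ∈ D, σ.1) := by
  constructor
  · intro s t hst ht
    simp only [Set.mem_iUnion] at ht ⊢
    obtain ⟨σ, hσD, htσ⟩ := ht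
    exact ⟨σ, hσD, σ.2.1 _ _ hst htσ⟩
  · intro s hs t ht
    simp only [Set.mem_iUnion] at hs ht
    obtain ⟨σ₁, h₁, hs⟩ := hs
    obtain ⟨σ₂, h₂, ht⟩ := ht
    obtain ⟨σ, hσD, hsub₁, hsub₂⟩ := hdir σ₁ h₁ σ₂ h₂
    exact σ.2.2 _ (hsub₁ hs) _ (hsub₂ ht)

include hmono hA hcont in
lemma approx_union_le : ∀ (k : ℕ) (D : Set (Costrat E ar X)), D.Nonempty →
    (∀ σ₁ ∈ D, ∀ σ₂ ∈ D, ∃ σ ∈ D, σ₁.1 ⊆ σ.1 ∧ σ₂.1 ⊆ σ.1) →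
    ∀ b : A, (∀ σ ∈ D, hfun ρ α hmono hA σ ≤ b) →
    approx ρ α k (⋃ σ ∈ D, σ.1) ≤ b := by
  intro k
  induction k with
  | zero => intro D _ _ b _; exact bot_le
  | succ k ih =>
    intro D hne hdir b hb
    set U : Set (Coplay E ar X) := ⋃ σ ∈ D, σ.1 with hU
    have hUc : IsCostrategy U := iUnion_isCostrategy hdir
    rcases classify hUc with hUe | ⟨x, hx⟩ | ⟨m, hm⟩
    · rw [hUe, approx_empty]; exact bot_le
    · have : Coplay.ret x ∈ U := hx ▸ rfl
      simp only [hU, Set.mem_iUnion] at this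
      obtain ⟨σ, hσD, hxσ⟩ := this
      have hσeq : σ.1 = {Coplay.ret x} := ret_eq σ.2 hxσ
      have hfr := hfun_ret (ρ := ρ) (α := α) hmono hA hσeq
      rw [approx_ret hx, ← hfr]
      exact hb σ hσD
    · -- node case
      rw [approx_op hUc hm]
      -- the subfamily of strategies containing op m
      set Dm : Set (Costrat E ar X) := {σ ∈ D | Coplay.op m ∈ σ.1} with hDm
      have hDmne : Dm.Nonempty := by
        have := hm
        simp only [hU, Set.mem_iUnion] at this
        obtain ⟨σ, hσD, hmσ⟩ := this
        exact ⟨σ, hσD, hmσ⟩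
      have hDmdir : ∀ σ₁ ∈ Dm, ∀ σ₂ ∈ Dm, ∃ σ ∈ Dm, σ₁.1 ⊆ σ.1 ∧ σ₂.1 ⊆ σ.1 := by
        rintro σ₁ ⟨h₁, hm₁⟩ σ₂ ⟨h₂, _⟩
        obtain ⟨σ, hσD, hs₁, hs₂⟩ := hdir σ₁ h₁ σ₂ h₂
        exact ⟨σ, ⟨hσD, hs₁ hm₁⟩, hs₁, hs₂⟩
      -- branch family at n
      set bC : ar m → Costrat E ar X → Costrat E ar X :=
        fun n σ => ⟨branch m n σ.1, branch_isCostrategy σ.2 m n⟩ with hbC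
      have hbr_union : ∀ n : ar m, branch m n U = ⋃ τ ∈ bC n '' Dm, τ.1 := by
        intro n
        ext u
        constructor
        · intro hu
          have hu' : Coplay.cons m n u ∈ U := hu
          rw [hU] at hu'
          obtain ⟨σ, hσD, hcons⟩ := Set.mem_iUnion₂.mp hu'
          exact Set.mem_iUnion₂.mpr
            ⟨bC n σ, ⟨σ, ⟨hσD, op_mem_of_cons σ.2 hcons⟩, rfl⟩, hcons⟩
        · intro hu
          obtain ⟨τ, hτ, huτ⟩ := Set.mem_iUnion₂.mp hu
          obtain ⟨σ, ⟨hσD, -⟩, rfl⟩ := hτ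
          show Coplay.cons m n u ∈ U
          rw [hU]
          exact Set.mem_iUnion₂.mpr ⟨σ, hσD, huτ⟩
      have hbdir : ∀ n : ar m, ∀ τ₁ ∈ bC n '' Dm, ∀ τ₂ ∈ bC n '' Dm,
          ∃ τ ∈ bC n '' Dm, τ₁.1 ⊆ τ.1 ∧ τ₂.1 ⊆ τ.1 := by
        rintro n _ ⟨σ₁, h₁, rfl⟩ _ ⟨σ₂, h₂, rfl⟩
        obtain ⟨σ, hσDm, hs₁, hs₂⟩ := hDmdir σ₁ h₁ σ₂ h₂
        exact ⟨bC n σ, ⟨σ, hσDm, rfl⟩, branch_mono hs₁, branch_mono hs₂⟩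
      -- lub of hfun over the branch family
      have hcex : ∀ n : ar m, ∃ l : A, IsLUB (hfun ρ α hmono hA '' (bC n '' Dm)) l := by
        intro n
        apply hA
        · exact ⟨_, Set.mem_image_of_mem _ (Set.mem_image_of_mem _ hDmne.choose_spec)⟩
        · rintro _ ⟨τ₁, h₁, rfl⟩ _ ⟨τ₂, h₂, rfl⟩
          obtain ⟨τ, hτ, hs₁, hs₂⟩ := hbdir n τ₁ h₁ τ₂ h₂
          exact ⟨_, Set.mem_image_of_mem _ hτ, hfun_mono hmono hA hs₁, hfun_mono hmono hA hs₂⟩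
      choose c hclub using hcex
      have hstep : (fun n => approx ρ α k (branch m n U)) ≤ c := by
        intro n
        show approx ρ α k (branch m n U) ≤ c n
        rw [hbr_union n]
        apply ih (bC n '' Dm) ⟨_, Set.mem_image_of_mem _ hDmne.choose_spec⟩ (hbdir n) (c n)
        intro τ hτ
        exact (hclub n).1 (Set.mem_image_of_mem _ hτ)
      refine le_trans (hmono m hstep) ?_
      -- now show α m c ≤ b
      set S : Set (ar m → A) := (fun σ : Costrat E ar X =>
        fun n => hfun ρ α hmono hA (bC n σ)) '' Dm with hS
      have hSne : S.Nonempty := ⟨_, Set.mem_image_of_mem _ hDmne.choose_spec⟩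
      have hSdir : DirectedOn (· ≤ ·) S := by
        rintro _ ⟨σ₁, h₁, rfl⟩ _ ⟨σ₂, h₂, rfl⟩
        obtain ⟨σ, hσDm, hs₁, hs₂⟩ := hDmdir σ₁ h₁ σ₂ h₂
        exact ⟨_, Set.mem_image_of_mem _ hσDm,
          fun n => hfun_mono hmono hA (branch_mono hs₁),
          fun n => hfun_mono hmono hA (branch_mono hs₂)⟩
      have hcS : IsLUB S c := by
        constructor
        · rintro _ ⟨σ, hσDm, rfl⟩
          intro n
          exact (hclub n).1 ⟨_, ⟨σ, hσDm, rfl⟩, rfl⟩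
        · intro u hu n
          apply (hclub n).2
          rintro _ ⟨_, ⟨σ, hσDm, rfl⟩, rfl⟩
          exact hu ⟨σ, hσDm, rfl⟩ n
      have hαS := hcont m S hSne hSdir c hcS
      apply hαS.2
      rintro _ ⟨_, ⟨σ, hσDm, rfl⟩, rfl⟩
      have hnode : σ.1 = {Coplay.op m} ∪
          {s | ∃ (n : ar m) (u : Coplay E ar X), u ∈ (bC n σ).1 ∧ s = Coplay.cons m n u} :=
        op_eq σ.2 hσDm.2
      rw [← hfun_op hmono hA hcont hnode]
      exact hb σ hσDm.1

lemma empty_isCostrategy : IsCostrategy (∅ : Set (Coplay E ar X)) :=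
  ⟨fun _ _ _ ht => ht, fun _ hs => absurd hs (Set.notMem_empty _)⟩

def depth : Coplay E ar X → ℕ
  | .ret _ => 0
  | .op _ => 0
  | .cons _ _ s => depth s + 1

lemma depth_mono_prefix {s t : Coplay E ar X} (h : Coplay.Prefix s t) :
    depth s ≤ depth t := by
  induction h with
  | ret => exact le_refl _
  | op => exact le_refl _
  | op_cons => exact Nat.zero_le _
  | cons m n h ih => exact Nat.succ_le_succ ih

def trunc (k : ℕ) (σ : Set (Coplay E ar X)) : Set (Coplay E ar X) :=
  {s ∈ σ | depth s ≤ k}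

lemma trunc_isCostrategy {σ : Set (Coplay E ar X)} (hσ : IsCostrategy σ) (k : ℕ) :
    IsCostrategy (trunc k σ) := by
  constructor
  · rintro s t hst ⟨htσ, htd⟩
    exact ⟨hσ.1 _ _ hst htσ, le_trans (depth_mono_prefix hst) htd⟩
  · rintro s ⟨hs, -⟩ t ⟨ht, -⟩
    exact hσ.2 _ hs _ ht

lemma trunc_subset (k : ℕ) (σ : Set (Coplay E ar X)) : trunc k σ ⊆ σ :=
  fun _ hs => hs.1

lemma trunc_mono {j k : ℕ} (h : j ≤ k) (σ : Set (Coplay E ar X)) :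
    trunc j σ ⊆ trunc k σ := fun _ hs => ⟨hs.1, le_trans hs.2 h⟩

lemma trunc_empty (k : ℕ) : trunc k (∅ : Set (Coplay E ar X)) = ∅ := by
  ext s; exact ⟨fun hs => hs.1, fun hs => absurd hs (Set.notMem_empty _)⟩

lemma trunc_ret {σ : Set (Coplay E ar X)} {x : X} (hx : σ = {Coplay.ret x}) (k : ℕ) :
    trunc k σ = {Coplay.ret x} := by
  subst hx
  ext s
  constructor
  · rintro ⟨hs, -⟩; exact hs
  · rintro rfl; exact ⟨rfl, Nat.zero_le _⟩

lemma trunc_op_zero {σ : Set (Coplay E ar X)} (hσ : IsCostrategy σ) {m : E}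
    (hm : Coplay.op m ∈ σ) :
    trunc 0 σ = {Coplay.op m} ∪
      {s | ∃ (n : ar m) (u : Coplay E ar X),
        u ∈ (∅ : Set (Coplay E ar X)) ∧ s = Coplay.cons m n u} := by
  ext t
  constructor
  · rintro ⟨ht, hd⟩
    rcases mem_of_op hσ hm ht with rfl | ⟨n, u, rfl⟩
    · exact Or.inl rfl
    · exact absurd hd (by simp [depth])
  · rintro (rfl | ⟨n, u, hu, rfl⟩)
    · exact ⟨hm, le_refl _⟩
    · exact absurd hu (Set.notMem_empty _)

lemma trunc_op_succ {σ : Set (Coplay E ar X)} (hσ : IsCostrategy σ) {m : E}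
    (hm : Coplay.op m ∈ σ) (k : ℕ) :
    trunc (k+1) σ = {Coplay.op m} ∪
      {s | ∃ (n : ar m) (u : Coplay E ar X),
        u ∈ trunc k (branch m n σ) ∧ s = Coplay.cons m n u} := by
  ext t
  constructor
  · rintro ⟨ht, hd⟩
    rcases mem_of_op hσ hm ht with rfl | ⟨n, u, rfl⟩
    · exact Or.inl rfl
    · refine Or.inr ⟨n, u, ⟨ht, ?_⟩, rfl⟩
      exact Nat.succ_le_succ_iff.mp hd
  · rintro (rfl | ⟨n, u, ⟨hu, hd⟩, rfl⟩)
    · exact ⟨hm, Nat.zero_le _⟩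
    · exact ⟨hu, Nat.succ_le_succ hd⟩

include hmono hA in
lemma hfun_unique (h' : Costrat E ar X → A)
    (p1 : ∀ σ : Costrat E ar X, σ.1 = ∅ → h' σ = ⊥)
    (p3 : ∀ D : Set (Costrat E ar X), D.Nonempty →
        (∀ σ₁ ∈ D, ∀ σ₂ ∈ D, ∃ σ ∈ D, σ₁.1 ⊆ σ.1 ∧ σ₂.1 ⊆ σ.1) →
        ∀ τ : Costrat E ar X, τ.1 = ⋃ σ ∈ D, σ.1 → IsLUB (h' '' D) (h' τ))
    (p4 : ∀ (x : X) (σ : Costrat E ar X), σ.1 = {Coplay.ret x} → h' σ = ρ x)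
    (p5 : ∀ (m : E) (f : ar m → Costrat E ar X) (σ : Costrat E ar X),
        σ.1 = {Coplay.op m} ∪
          {s | ∃ (n : ar m) (u : Coplay E ar X), u ∈ (f n).1 ∧ s = Coplay.cons m n u} →
        h' σ = α m fun n => h' (f n)) :
    ∀ σ : Costrat E ar X, h' σ = hfun ρ α hmono hA σ := by
  -- (a) every approximant is below h'
  have ha : ∀ (k : ℕ) (σ : Costrat E ar X), approx ρ α k σ.1 ≤ h' σ := by
    intro k
    induction k with
    | zero => intro σ; exact bot_le
    | succ k ih =>
      intro σ
      rcases classify σ.2 with he | ⟨x, hx⟩ | ⟨m, hm⟩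
      · rw [he, approx_empty, p1 σ he]
      · rw [approx_ret hx, p4 x σ hx]
      · rw [approx_op σ.2 hm,
          p5 m (fun n => ⟨branch m n σ.1, branch_isCostrategy σ.2 m n⟩) σ (op_eq σ.2 hm)]
        exact hmono m fun n => ih ⟨branch m n σ.1, branch_isCostrategy σ.2 m n⟩
  -- (b) h' of truncations is below the approximants
  have hb : ∀ (k : ℕ) (σ : Costrat E ar X),
      h' ⟨trunc k σ.1, trunc_isCostrategy σ.2 k⟩ ≤ approx ρ α (k+1) σ.1 := by
    intro k
    induction k with
    | zero =>
      intro σ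
      rcases classify σ.2 with he | ⟨x, hx⟩ | ⟨m, hm⟩
      · rw [p1 _ (by simp [he, trunc_empty]), he, approx_empty]
      · rw [p4 x _ (trunc_ret hx 0), approx_ret hx]
      · rw [p5 m (fun _ => ⟨∅, empty_isCostrategy⟩) _ (trunc_op_zero σ.2 hm),
          approx_op σ.2 hm]
        apply le_of_eq
        congr 1
        funext n
        rw [p1 _ rfl, approx_zero]
    | succ k ih =>
      intro σ
      rcases classify σ.2 with he | ⟨x, hx⟩ | ⟨m, hm⟩
      · rw [p1 _ (by simp [he, trunc_empty]), he, approx_empty]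
      · rw [p4 x _ (trunc_ret hx (k+1)), approx_ret hx]
      · rw [p5 m (fun n => ⟨trunc k (branch m n σ.1),
            trunc_isCostrategy (branch_isCostrategy σ.2 m n) k⟩) _ (trunc_op_succ σ.2 hm k),
          approx_op σ.2 hm]
        exact hmono m fun n => ih ⟨branch m n σ.1, branch_isCostrategy σ.2 m n⟩
  intro σ
  -- the truncation family
  set D : Set (Costrat E ar X) :=
    Set.range fun k => (⟨trunc k σ.1, trunc_isCostrategy σ.2 k⟩ : Costrat E ar X) with hD
  have hDne : D.Nonempty := ⟨_, 0, rfl⟩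
  have hDdir : ∀ σ₁ ∈ D, ∀ σ₂ ∈ D, ∃ τ ∈ D, σ₁.1 ⊆ τ.1 ∧ σ₂.1 ⊆ τ.1 := by
    rintro _ ⟨j, rfl⟩ _ ⟨k, rfl⟩
    exact ⟨_, ⟨max j k, rfl⟩, trunc_mono (le_max_left j k) _,
      trunc_mono (le_max_right j k) _⟩
  have hUeq : σ.1 = ⋃ τ ∈ D, τ.1 := by
    ext s
    constructor
    · intro hs
      exact Set.mem_iUnion₂.mpr ⟨_, ⟨depth s, rfl⟩, hs, le_refl _⟩
    · intro hs
      obtain ⟨τ, hτ, hsτ⟩ := Set.mem_iUnion₂.mp hs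
      obtain ⟨k, rfl⟩ := hτ
      exact hsτ.1
  have hlub := p3 D hDne hDdir σ hUeq
  apply le_antisymm
  · apply hlub.2
    rintro _ ⟨_, ⟨k, rfl⟩, rfl⟩
    exact le_trans (hb k σ) (approx_le_hfun hmono hA (k+1) σ)
  · exact hfun_le hmono hA fun k => ha k σ

end Main

theorem costrategies_initial_algebra (E : Type u) (ar : E → Type v) (X : Type w)
    (A : Type*) [PartialOrder A] [OrderBot A]
    (hA : ∀ S : Set A, S.Nonempty → DirectedOn (· ≤ ·) S → ∃ l : A, IsLUB S l)
    (ρ : X → A) (α : (m : E) → (ar m → A) → A)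
    (hmono : ∀ m : E, Monotone (α m))
    (hcont : ∀ (m : E) (S : Set (ar m → A)), S.Nonempty → DirectedOn (· ≤ ·) S →
      ∀ g : ar m → A, IsLUB S g → IsLUB (α m '' S) (α m g)) :
    ∃! h : {σ : Set (Coplay E ar X) // IsCostrategy σ} → A,
      (∀ σ : {σ : Set (Coplay E ar X) // IsCostrategy σ}, σ.1 = ∅ → h σ = ⊥) ∧
      (∀ σ τ : {σ : Set (Coplay E ar X) // IsCostrategy σ}, σ.1 ⊆ τ.1 → h σ ≤ h τ) ∧
      (∀ D : Set {σ : Set (Coplay E ar X) // IsCostrategy σ}, D.Nonempty →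
        (∀ σ₁ ∈ D, ∀ σ₂ ∈ D, ∃ σ ∈ D, σ₁.1 ⊆ σ.1 ∧ σ₂.1 ⊆ σ.1) →
        ∀ τ : {σ : Set (Coplay E ar X) // IsCostrategy σ}, τ.1 = ⋃ σ ∈ D, σ.1 →
          IsLUB (h '' D) (h τ)) ∧
      (∀ (x : X) (σ : {σ : Set (Coplay E ar X) // IsCostrategy σ}),
        σ.1 = {Coplay.ret x} → h σ = ρ x) ∧
      (∀ (m : E) (f : ar m → {σ : Set (Coplay E ar X) // IsCostrategy σ})
          (σ : {σ : Set (Coplay E ar X) // IsCostrategy σ}),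
        σ.1 = {Coplay.op m} ∪
          {s | ∃ (n : ar m) (u : Coplay E ar X), u ∈ (f n).1 ∧ s = Coplay.cons m n u} →
        h σ = α m (fun n => h (f n))) := by
  refine ⟨hfun ρ α hmono hA, ⟨?_, ?_, ?_, ?_, ?_⟩, ?_⟩
  · intro σ hσ
    exact hfun_empty hmono hA hσ
  · intro σ τ h
    exact hfun_mono hmono hA h
  · intro D hne hdir τ hτ
    constructor
    · rintro _ ⟨σ, hσD, rfl⟩
      exact hfun_mono hmono hA (hτ ▸ Set.subset_iUnion₂ (s := fun σ _ => σ.1) σ hσD)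
    · intro b hb
      refine hfun_le hmono hA fun k => ?_
      rw [hτ]
      exact approx_union_le hmono hA hcont k D hne hdir b
        fun σ hσD => hb (Set.mem_image_of_mem _ hσD)
  · intro x σ hσ
    exact hfun_ret hmono hA hσ
  · intro m f σ hσ
    exact hfun_op hmono hA hcont hσ
  · rintro h' ⟨p1, -, p3, p4, p5⟩
    funext σ
    exact hfun_unique hmono hA h' p1 p3 (fun x σ h => p4 x σ h) p5 σ

end CS

/-- Theorem 3.2, algebra part: initiality of `S̄_E(X)`. -/
theorem costrategies_initial_algebra (E : Type u) (ar : E → Type v) (X : Type w)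
    (A : Type*) [PartialOrder A] [OrderBot A]
    (hA : ∀ S : Set A, S.Nonempty → DirectedOn (· ≤ ·) S → ∃ l : A, IsLUB S l)
    (ρ : X → A) (α : (m : E) → (ar m → A) → A)
    (hmono : ∀ m : E, Monotone (α m))
    (hcont : ∀ (m : E) (S : Set (ar m → A)), S.Nonempty → DirectedOn (· ≤ ·) S →
      ∀ g : ar m → A, IsLUB S g → IsLUB (α m '' S) (α m g)) :
    ∃! h : {σ : Set (Coplay E ar X) // IsCostrategy σ} → A,
      (∀ σ : {σ : Set (Coplay E ar X) // IsCostrategy σ}, σ.1 = ∅ → h σ = ⊥) ∧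
      (∀ σ τ : {σ : Set (Coplay E ar X) // IsCostrategy σ}, σ.1 ⊆ τ.1 → h σ ≤ h τ) ∧
      (∀ D : Set {σ : Set (Coplay E ar X) // IsCostrategy σ}, D.Nonempty →
        (∀ σ₁ ∈ D, ∀ σ₂ ∈ D, ∃ σ ∈ D, σ₁.1 ⊆ σ.1 ∧ σ₂.1 ⊆ σ.1) →
        ∀ τ : {σ : Set (Coplay E ar X) // IsCostrategy σ}, τ.1 = ⋃ σ ∈ D, σ.1 →
          IsLUB (h '' D) (h τ)) ∧
      (∀ (x : X) (σ : {σ : Set (Coplay E ar X) // IsCostrategy σ}),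
        σ.1 = {Coplay.ret x} → h σ = ρ x) ∧
      (∀ (m : E) (f : ar m → {σ : Set (Coplay E ar X) // IsCostrategy σ})
          (σ : {σ : Set (Coplay E ar X) // IsCostrategy σ}),
        σ.1 = {Coplay.op m} ∪
          {s | ∃ (n : ar m) (u : Coplay E ar X), u ∈ (f n).1 ∧ s = Coplay.cons m n u} →
        h σ = α m (fun n => h (f n))) :=
  CS.costrategies_initial_algebra E ar X A hA ρ α hmono hcont
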